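/- Let R_k be the quotient of the multivariate polynomial ring MvPolynomial (Fin k) (ZMod 2) by the ideal generated by the squares X(i)² of all the variables. Let G be a finite group of odd order, let v₁, v₂ ∈ R_k[G], and let γ₂, γ₄ ∈ R_k with (γ₂ + γ₄)² = 1. Suppose v₁*v₁ + v₂*v₂ + (γ₂+γ₄)²·ĝ + 1 = 0 in R_k[G]. Then v₁*v₁ + v₂*v₂ is not a unit of the group algebra R_k[G]. -/

import Mathlib

/-- The ring `R_k = 𝔽₂[u₁,…,u_k]/(uᵢ²)`. -/
abbrev Rk (k : ℕ) : Type :=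
  MvPolynomial (Fin k) (ZMod 2) ⧸
    Ideal.span (Set.range fun i : Fin k => (MvPolynomial.X i : MvPolynomial (Fin k) (ZMod 2)) ^ 2)

/-- The canonical involution `v* = ∑ α_g g⁻¹`. -/
noncomputable def grInvol {R : Type*} [CommRing R] {G : Type*} [Group G]
    (v : MonoidAlgebra R G) : MonoidAlgebra R G :=
  MonoidAlgebra.ofCoeff (Finsupp.equivMapDomain (Equiv.inv G) v.coeff)

/-- `ĝ = ∑_{g ∈ G} g` in the group algebra. -/
noncomputable def ghat (R : Type*) [CommRing R] (G : Type*) [Group G] [Fintype G] :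
    MonoidAlgebra R G :=
  ∑ g : G, MonoidAlgebra.of R G g

set_option synthInstance.maxHeartbeats 1000000

theorem stmt4 {k : ℕ} {G : Type*} [Group G] [Fintype G]
    (hodd : Odd (Fintype.card G))
    (v₁ v₂ : MonoidAlgebra (Rk k) G) (γ₂ γ₄ : Rk k)
    (hγ : (γ₂ + γ₄) ^ 2 = 1)
    (h4 : grInvol v₁ * v₁ + grInvol v₂ * v₂ + (γ₂ + γ₄) ^ 2 • ghat (Rk k) G + 1 = 0) :
    ¬ IsUnit (grInvol v₁ * v₁ + grInvol v₂ * v₂) := by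
  have hI : Ideal.span (Set.range fun i : Fin k =>
      (MvPolynomial.X i : MvPolynomial (Fin k) (ZMod 2)) ^ 2) ≤
      RingHom.ker (MvPolynomial.aeval (0 : Fin k → ZMod 2)).toRingHom := by
    rw [Ideal.span_le]
    rintro _ ⟨i, rfl⟩
    simp [RingHom.mem_ker]
  let e : Rk k →+* ZMod 2 := Ideal.Quotient.lift _ _ (fun a ha => hI ha)
  let ε : MonoidAlgebra (Rk k) G →ₐ[Rk k] Rk k := MonoidAlgebra.lift (Rk k) (Rk k) G 1
  let φ : MonoidAlgebra (Rk k) G →+* ZMod 2 := e.comp ε.toRingHom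
  intro hu
  rw [hγ, one_smul] at h4
  have hS : grInvol v₁ * v₁ + grInvol v₂ * v₂ =
      -(ghat (Rk k) G + 1) := by
    rw [add_assoc] at h4
    exact eq_neg_of_add_eq_zero_left h4
  have hεg : ε (ghat (Rk k) G) = (Fintype.card G : Rk k) := by
    simp [ghat, ε, MonoidAlgebra.lift_of, MonoidAlgebra.lift_single, Finset.card_univ]
  have hcard : e ((Fintype.card G : Rk k)) = 1 := by
    rw [map_natCast]
    obtain ⟨m, hm⟩ := hodd
    rw [hm]
    push_cast
    rw [show ((2 : ZMod 2)) = 0 by decide]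
    ring
  have h0 : φ (grInvol v₁ * v₁ + grInvol v₂ * v₂) = 0 := by
    rw [hS]
    have hg : φ (ghat (Rk k) G) = 1 := by
      show e (ε (ghat (Rk k) G)) = 1
      rw [hεg, hcard]
    rw [map_neg, map_add, hg, map_one]
    decide
  have := hu.map φ
  rw [h0] at this
  exact (by decide : ¬ IsUnit (0 : ZMod 2)) this
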